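/- For any multirelation R, the domain multirelation satisfies d(R) · R = R. -/
import Mathlib

open Set

/-- Sequential composition of multirelations (Peleg). -/
def mseq {X : Type*} (R S : Set (X × Set X)) : Set (X × Set X) :=
  {p | ∃ B, (p.1, B) ∈ R ∧ ∃ f : X → Set X, (∀ b ∈ B, (b, f b) ∈ S) ∧ p.2 = ⋃ b ∈ B, f b}

/-- The unit of sequential composition. -/
def sunit (X : Type*) : Set (X × Set X) := {p | p.2 = {p.1}}

/-- Parallel (concurrent) composition of multirelations. -/
def mpar {X : Type*} (R S : Set (X × Set X)) : Set (X × Set X) :=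
  {p | ∃ A B, (p.1, A) ∈ R ∧ (p.1, B) ∈ S ∧ p.2 = A ∪ B}

/-- The unit of parallel composition. -/
def punit (X : Type*) : Set (X × Set X) := {p | p.2 = (∅ : Set X)}

/-- Domain of a multirelation. -/
def mdom {X : Type*} (R : Set (X × Set X)) : Set (X × Set X) :=
  {p | p.2 = {p.1} ∧ ∃ A, (p.1, A) ∈ R}

/-- Antidomain of a multirelation. -/
def mantidom {X : Type*} (R : Set (X × Set X)) : Set (X × Set X) :=
  {p | p.2 = {p.1} ∧ ¬ ∃ A, (p.1, A) ∈ R}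

/-- Diamond operator. -/
def mdia {X : Type*} (R P : Set (X × Set X)) : Set (X × Set X) := mdom (mseq R P)

theorem stmt11 {X : Type*} (R : Set (X × Set X)) :
    mseq (mdom R) R = R := by
  ext ⟨a, A⟩
  constructor
  · rintro ⟨B, ⟨hB, -⟩, f, hf, hA⟩
    simp only at hB hA
    subst hB
    simp only [mem_singleton_iff, iUnion_iUnion_eq_left] at hA
    subst hA
    exact hf a rfl
  · intro h
    exact ⟨{a}, ⟨rfl, A, h⟩, fun _ => A, fun b hb => by simp at hb; subst hb; exact h,
      by simp⟩
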